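/- (Pointwise form of the claim that the deterministic model of Wen et al. is label-aligned.) Let |Y| = c ≥ 2, let i ∈ Y and let Q ∈ Δ(Y) be the point mass at i. Let q : Y × Y → ℝ satisfy q(y,y) = 1 for all y and 0 ≤ q(y,k) < 1 for all k ≠ y. Define M(y)(s) = (∏_{k ∈ s} q(y,k)) · (∏_{j ∉ s} (1 − q(y,j))). Then each M(y) is a probability vector on S, and the bag frequencies F(y) = Σ_{s ∈ S, y ∈ s} Σ_{y'} Q(y')·M(y')(s) satisfy F(i) = 1 and F(j) < 1 for every j ≠ i; hence argmax F = {i} = argmax Q. -/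
import Mathlib

def IsProbVec {T : Type*} [Fintype T] (Q : T → ℝ) : Prop :=
  (∀ t, 0 ≤ Q t) ∧ ∑ t, Q t = 1

def argmaxSet {Y : Type*} (Q : Y → ℝ) : Set Y := {y | ∀ y', Q y' ≤ Q y}

def bagFreq {Y : Type*} [Fintype Y] [DecidableEq Y]
    (M : Y → Finset Y → ℝ) (Q : Y → ℝ) (y : Y) : ℝ :=
  ∑ s ∈ Finset.univ.filter (fun s : Finset Y => y ∈ s), ∑ y', Q y' * M y' s

def Mwen {Y : Type*} [Fintype Y] [DecidableEq Y] (q : Y → Y → ℝ) :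
    Y → Finset Y → ℝ :=
  fun y s => (∏ k ∈ s, q y k) * ∏ l ∈ sᶜ, (1 - q y l)

open Finset in
lemma sum_Mwen_total {Y : Type*} [Fintype Y] [DecidableEq Y] (q : Y → Y → ℝ) (y : Y) :
    ∑ s : Finset Y, Mwen q y s = 1 := by
  have h := Finset.prod_add (fun k => q y k) (fun k => 1 - q y k) (Finset.univ : Finset Y)
  simp only [add_sub_cancel, Finset.prod_const_one] at h
  rw [← Finset.powerset_univ] at *
  rw [h]
  apply Finset.sum_congr rfl
  intro s hs
  simp [Mwen, Finset.compl_eq_univ_sdiff]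

open Finset in
lemma sum_Mwen_mem {Y : Type*} [Fintype Y] [DecidableEq Y] (q : Y → Y → ℝ) (y j : Y) :
    ∑ s ∈ Finset.univ.filter (fun s : Finset Y => j ∈ s), Mwen q y s = q y j := by
  have hbij : ∑ s ∈ Finset.univ.filter (fun s : Finset Y => j ∈ s), Mwen q y s
      = ∑ t ∈ (Finset.univ.erase j).powerset, Mwen q y (insert j t) := by
    refine Finset.sum_nbij' (fun s => s.erase j) (fun t => insert j t) ?_ ?_ ?_ ?_ ?_
    · intro s hs
      simp only [mem_filter, mem_univ, true_and] at hs
      simp only [Finset.mem_powerset]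
      intro x hx
      simp only [Finset.mem_erase] at hx ⊢
      exact ⟨hx.1, Finset.mem_univ x⟩
    · intro t ht; simp
    · intro s hs
      simp only [mem_filter, mem_univ, true_and] at hs
      exact Finset.insert_erase hs
    · intro t ht
      simp only [Finset.mem_powerset] at ht
      apply Finset.erase_insert
      intro hj; exact absurd (ht hj) (by simp)
    · intro s hs
      simp only [mem_filter, mem_univ, true_and] at hs
      rw [Finset.insert_erase hs]
  rw [hbij]
  have hcompl : ∀ t : Finset Y, t ∈ (Finset.univ.erase j).powerset →
      Mwen q y (insert j t) = q y j * ((∏ k ∈ t, q y k) *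
        ∏ l ∈ (Finset.univ.erase j) \ t, (1 - q y l)) := by
    intro t ht
    simp only [Finset.mem_powerset] at ht
    have hj : j ∉ t := fun hj => absurd (ht hj) (by simp)
    have hc : (insert j t)ᶜ = (Finset.univ.erase j) \ t := by
      ext x; simp only [Finset.mem_compl, Finset.mem_insert, Finset.mem_sdiff,
        Finset.mem_erase, Finset.mem_univ, and_true, true_and]
      tauto
    rw [Mwen, Finset.prod_insert hj, hc, mul_assoc]
  rw [Finset.sum_congr rfl hcompl, ← Finset.mul_sum,
    ← Finset.prod_add (fun k => q y k) (fun k => 1 - q y k)]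
  simp

theorem wen_labelAligned_pointwise
    {Y : Type*} [Fintype Y] [DecidableEq Y] (hY : 2 ≤ Fintype.card Y)
    (i : Y) (q : Y → Y → ℝ)
    (hdiag : ∀ y, q y y = 1)
    (hq0 : ∀ y k, 0 ≤ q y k)
    (hq1 : ∀ y k, k ≠ y → q y k < 1) :
    (∀ y : Y, IsProbVec (Mwen q y)) ∧
    bagFreq (Mwen q) (fun y => if y = i then 1 else 0) i = 1 ∧
    (∀ j : Y, j ≠ i →
      bagFreq (Mwen q) (fun y => if y = i then 1 else 0) j < 1) ∧
    argmaxSet (bagFreq (Mwen q) (fun y => if y = i then 1 else 0)) = {i} ∧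
    argmaxSet (fun y : Y => if y = i then (1 : ℝ) else 0) = {i} := by
  have hle : ∀ y k, q y k ≤ 1 := by
    intro y k
    rcases eq_or_ne k y with rfl | h
    · rw [hdiag]
    · exact (hq1 y k h).le
  have hF : ∀ j : Y, bagFreq (Mwen q) (fun y => if y = i then 1 else 0) j = q i j := by
    intro j
    rw [bagFreq]
    have : ∀ s : Finset Y, (∑ y', (if y' = i then (1:ℝ) else 0) * Mwen q y' s)
        = Mwen q i s := by
      intro s
      rw [Finset.sum_eq_single i]
      · simp
      · intro b _ hb; simp [hb]
      · simp
    rw [Finset.sum_congr rfl (fun s _ => this s)]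
    exact sum_Mwen_mem q i j
  refine ⟨?_, ?_, ?_, ?_, ?_⟩
  · intro y
    constructor
    · intro s
      apply mul_nonneg
      · exact Finset.prod_nonneg fun k _ => hq0 y k
      · exact Finset.prod_nonneg fun l _ => by linarith [hle y l]
    · exact sum_Mwen_total q y
  · rw [hF i, hdiag]
  · intro j hj
    rw [hF j]
    exact hq1 i j hj
  · ext y
    simp only [argmaxSet, Set.mem_setOf_eq, Set.mem_singleton_iff]
    constructor
    · intro h
      by_contra hy
      have h1 := h i
      rw [hF i, hdiag, hF y] at h1
      exact absurd h1 (not_le.mpr (hq1 i y hy))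
    · intro hy y'
      rw [hy, hF i, hdiag, hF y']
      exact hle i y'
  · ext y
    simp only [argmaxSet, Set.mem_setOf_eq, Set.mem_singleton_iff]
    constructor
    · intro h
      by_contra hy
      have h1 := h i
      simp [hy] at h1
      linarith
    · intro hy y'
      rw [hy]
      rcases eq_or_ne y' i with rfl | h
      · simp
      · simp [h]
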